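/- Chen's delocalization bound: Let H be a Hermitian matrix on ℓ²(Λ) for a finite set Λ, with orthonormal eigenbasis {ψ_α}_{α∈A}. For x ∈ Λ and ℓ > 0 let P_{x,ℓ} be multiplication by 1[|y − x| ≥ ℓ] (with respect to some metric on Λ), and define A_{ε,ℓ} := {α ∈ A : Σ_x |ψ_α(x)| · ‖P_{x,ℓ}ψ_α‖ < ε}. Then for any t ∈ ℝ and any ζ > 0, (1/|A|)Σ_x ‖P_{x,ℓ} e^{-itH} δ_x‖² ≤ (1 + 1/ζ)·ε + (1+ζ)·|A∖A_{ε,ℓ}|/|A|. -/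

import Mathlib

open Finset

lemma chen_aux_sq {a b ζ : ℝ} (hζ : 0 < ζ) :
    (a + b)^2 ≤ (1 + 1/ζ) * a^2 + (1 + ζ) * b^2 := by
  have key : ζ * ((1 + 1/ζ) * a^2 + (1 + ζ) * b^2 - (a + b)^2) = (a - ζ*b)^2 := by
    field_simp; ring
  nlinarith [sq_nonneg (a - ζ*b), hζ]

lemma chen_N_add {Λ : Type*} [Fintype Λ] (w : Λ → Prop) [DecidablePred w] (g h : Λ → ℂ) :
    Real.sqrt (∑ y, if w y then ‖g y + h y‖^2 else 0)
      ≤ Real.sqrt (∑ y, if w y then ‖g y‖^2 else 0)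
        + Real.sqrt (∑ y, if w y then ‖h y‖^2 else 0) := by
  set g' : EuclideanSpace ℂ Λ := WithLp.toLp 2 (fun y => if w y then g y else 0) with hg'
  set h' : EuclideanSpace ℂ Λ := WithLp.toLp 2 (fun y => if w y then h y else 0) with hh'
  have hnorm : ∀ (u : Λ → ℂ) (u' : EuclideanSpace ℂ Λ), (∀ y, u' y = if w y then u y else 0) →
      ‖u'‖ = Real.sqrt (∑ y, if w y then ‖u y‖^2 else 0) := by
    intro u u' hu
    rw [EuclideanSpace.norm_eq]
    congr 1
    refine Finset.sum_congr rfl fun y _ => ?_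
    rw [hu y]; split <;> simp
  have h1 : ‖g' + h'‖ ≤ ‖g'‖ + ‖h'‖ := norm_add_le _ _
  rw [hnorm g g' (fun y => rfl), hnorm h h' (fun y => rfl)] at h1
  rw [hnorm (fun y => g y + h y) (g' + h') (fun y => by
    show g' y + h' y = _
    rw [hg', hh']; simp only []; split <;> simp)] at h1
  exact h1

lemma chen_N_zero {Λ : Type*} [Fintype Λ] (w : Λ → Prop) [DecidablePred w] :
    Real.sqrt (∑ y : Λ, if w y then ‖(0:ℂ)‖^2 else 0) = 0 := by simp

lemma chen_N_sum {Λ ι : Type*} [Fintype Λ] (w : Λ → Prop) [DecidablePred w]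
    (S : Finset ι) (f : ι → Λ → ℂ) :
    Real.sqrt (∑ y, if w y then ‖∑ α ∈ S, f α y‖^2 else 0)
      ≤ ∑ α ∈ S, Real.sqrt (∑ y, if w y then ‖f α y‖^2 else 0) := by
  classical
  induction S using Finset.induction_on with
  | empty => simp
  | insert a s hx ih =>
    rw [Finset.sum_insert hx]
    calc Real.sqrt (∑ y, if w y then ‖∑ α ∈ insert a s, f α y‖^2 else 0)
        = Real.sqrt (∑ y, if w y then ‖f a y + ∑ α ∈ s, f α y‖^2 else 0) := by
          simp_rw [Finset.sum_insert hx]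
      _ ≤ Real.sqrt (∑ y, if w y then ‖f a y‖^2 else 0)
          + Real.sqrt (∑ y, if w y then ‖∑ α ∈ s, f α y‖^2 else 0) :=
          chen_N_add w (f a) (fun y => ∑ α ∈ s, f α y)
      _ ≤ _ := by exact add_le_add_right ih _

lemma chen_N_smul {Λ : Type*} [Fintype Λ] (w : Λ → Prop) [DecidablePred w] (c : ℂ) (g : Λ → ℂ) :
    Real.sqrt (∑ y, if w y then ‖c * g y‖^2 else 0)
      = ‖c‖ * Real.sqrt (∑ y, if w y then ‖g y‖^2 else 0) := by
  have : ∀ y : Λ, (if w y then ‖c * g y‖^2 else 0) = ‖c‖^2 * (if w y then ‖g y‖^2 else 0) := by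
    intro y; split <;> simp [norm_mul, mul_pow]
  simp_rw [this, ← Finset.mul_sum, Real.sqrt_mul (sq_nonneg _), Real.sqrt_sq (norm_nonneg c)]

lemma chen_parseval {Λ : Type*} [Fintype Λ] [DecidableEq Λ] (ψ : Λ → Λ → ℂ)
    (horth : ∀ α β, (∑ x, starRingEnd ℂ (ψ α x) * ψ β x) = if α = β then 1 else 0)
    (S : Finset Λ) (d : Λ → ℂ) :
    ∑ y, ‖∑ α ∈ S, d α * ψ α y‖^2 = ∑ α ∈ S, ‖d α‖^2 := by
  set v : Λ → EuclideanSpace ℂ Λ := fun α => WithLp.toLp 2 (ψ α) with hv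
  have hon : Orthonormal ℂ v := by
    rw [orthonormal_iff_ite]
    intro α β
    simpa [v, PiLp.inner_apply, RCLike.inner_apply, mul_comm] using horth α β
  have hFy' : ∀ (T : Finset Λ) (y : Λ), (∑ α ∈ T, d α • v α) y = ∑ α ∈ T, d α * ψ α y := by
    intro T
    induction T using Finset.induction_on with
    | empty => intro y; rfl
    | insert a s hx ih =>
      intro y
      rw [Finset.sum_insert hx, Finset.sum_insert hx, ← ih y]
      rfl
  set F : EuclideanSpace ℂ Λ := ∑ α ∈ S, d α • v α with hF
  have hFy : ∀ y, F y = ∑ α ∈ S, d α * ψ α y := fun y => hFy' S y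
  have h1 : ∑ y, ‖∑ α ∈ S, d α * ψ α y‖^2 = ‖F‖^2 := by
    rw [EuclideanSpace.norm_eq, Real.sq_sqrt (by positivity)]
    exact Finset.sum_congr rfl fun y _ => by rw [hFy y]
  have h2 : (inner ℂ F F : ℂ) = ∑ α ∈ S, starRingEnd ℂ (d α) * d α := by
    rw [hF]
    simp only [inner_sum, sum_inner, inner_smul_left, inner_smul_right,
      orthonormal_iff_ite.mp hon]
    refine Finset.sum_congr rfl fun α hα => ?_
    simp [mul_boole, Finset.sum_ite_eq', hα, mul_comm]
  have h3 : ‖F‖^2 = RCLike.re (inner ℂ F F : ℂ) := norm_sq_eq_re_inner (𝕜 := ℂ) F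
  rw [h1, h3, h2, map_sum]
  refine Finset.sum_congr rfl fun α _ => ?_
  rw [show RCLike.re (starRingEnd ℂ (d α) * d α) = Complex.normSq (d α) by
    simp [Complex.normSq_apply, Complex.mul_re, Complex.conj_re, Complex.conj_im]]
  rw [Complex.normSq_eq_norm_sq]

section
variable {Λ : Type*} [Fintype Λ] [DecidableEq Λ]
  (H : Matrix Λ Λ ℂ) (ψ : Λ → Λ → ℂ) (μ : Λ → ℝ)

open scoped Matrix in
lemma chen_matrix_facts
    (horth : ∀ α β, (∑ x, starRingEnd ℂ (ψ α x) * ψ β x) = if α = β then 1 else 0)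
    (heig : ∀ α, H.mulVec (ψ α) = (μ α : ℂ) • ψ α) (t : ℝ) :
    (∀ x, ∑ α, ‖ψ α x‖^2 = 1) ∧ (∀ α, ∑ x, ‖ψ α x‖^2 = 1) ∧
    (∀ x y, (NormedSpace.exp ((-Complex.I * (t : ℂ)) • H)).mulVec (Pi.single x 1) y
      = ∑ α, (Complex.exp (-Complex.I * t * μ α) * starRingEnd ℂ (ψ α x)) * ψ α y) := by
  set V : Matrix Λ Λ ℂ := Matrix.of (fun y α => ψ α y) with hV
  have hVhV : Vᴴ * V = 1 := by
    ext α β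
    simpa [Matrix.mul_apply, Matrix.conjTranspose_apply, Matrix.one_apply, V] using horth α β
  have hVVh : V * Vᴴ = 1 := mul_eq_one_comm.mp hVhV
  have hcomplete : ∀ x, ∑ α, ‖ψ α x‖^2 = 1 := by
    intro x
    have h1 : ∑ α, ψ α x * starRingEnd ℂ (ψ α x) = 1 := by
      have := congrFun (congrFun hVVh x) x
      simpa [Matrix.mul_apply, Matrix.conjTranspose_apply, Matrix.one_apply, V] using this
    have h2 : ((∑ α, ‖ψ α x‖^2 : ℝ) : ℂ) = 1 := by
      rw [← h1]
      push_cast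
      refine Finset.sum_congr rfl fun α _ => ?_
      rw [Complex.mul_conj]
      norm_cast
      rw [Complex.normSq_eq_norm_sq]
    exact_mod_cast h2
  have hnormal : ∀ α, ∑ x, ‖ψ α x‖^2 = 1 := by
    intro α
    have h1 : ∑ x, ψ α x * starRingEnd ℂ (ψ α x) = 1 := by
      have h := horth α α
      rw [if_pos rfl] at h
      rw [← h]
      exact Finset.sum_congr rfl fun x _ => mul_comm _ _
    have h2 : ((∑ x, ‖ψ α x‖^2 : ℝ) : ℂ) = 1 := by
      rw [← h1]
      push_cast
      refine Finset.sum_congr rfl fun x _ => ?_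
      rw [Complex.mul_conj]
      norm_cast
      rw [Complex.normSq_eq_norm_sq]
    exact_mod_cast h2
  refine ⟨hcomplete, hnormal, ?_⟩
  set D : Matrix Λ Λ ℂ := Matrix.diagonal (fun α => (μ α : ℂ)) with hD
  have hHV : H * V = V * D := by
    ext y α
    have h := congrFun (heig α) y
    simp only [Matrix.mulVec, dotProduct, Pi.smul_apply, smul_eq_mul] at h
    simp [Matrix.mul_apply, Matrix.mul_diagonal, V, D, h, Matrix.diagonal_apply,
      Finset.sum_ite_eq', mul_comm]
  have hH : H = V * D * Vᴴ := by
    rw [← hHV, Matrix.mul_assoc, hVVh, Matrix.mul_one]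
  set u : (Matrix Λ Λ ℂ)ˣ := ⟨V, Vᴴ, hVVh, hVhV⟩ with hu
  have hsmul : (-Complex.I * (t:ℂ)) • H
      = V * Matrix.diagonal (fun α => -Complex.I * t * μ α) * Vᴴ := by
    rw [hH, ← Matrix.smul_mul, ← Matrix.mul_smul, hD, ← Matrix.diagonal_smul]
    congr 1
  have hexp : NormedSpace.exp ((-Complex.I * (t:ℂ)) • H)
      = V * Matrix.diagonal (fun α => Complex.exp (-Complex.I * t * μ α)) * Vᴴ := by
    have h1 : (-Complex.I * (t:ℂ)) • H = (u : Matrix Λ Λ ℂ)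
        * Matrix.diagonal (fun α => -Complex.I * t * μ α)
        * ((u⁻¹ : (Matrix Λ Λ ℂ)ˣ) : Matrix Λ Λ ℂ) := hsmul
    rw [h1, Matrix.exp_units_conj u, Matrix.exp_diagonal]
    have h2 : (NormedSpace.exp fun α => -Complex.I * (t:ℂ) * (μ α : ℂ))
        = fun α => Complex.exp (-Complex.I * t * μ α) := by
      funext α
      rw [Pi.coe_exp, ← Complex.exp_eq_exp_ℂ]
    rw [h2]
    rfl
  intro x y
  rw [hexp]
  have hsingle : (V * Matrix.diagonal (fun α => Complex.exp (-Complex.I * t * μ α)) * Vᴴ).mulVec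
      (Pi.single x 1) y
      = (V * Matrix.diagonal (fun α => Complex.exp (-Complex.I * t * μ α)) * Vᴴ) y x := by
    simp [Matrix.mulVec, dotProduct, Pi.single_apply, Finset.sum_ite_eq']
  rw [hsingle]
  simp only [Matrix.mul_apply, Matrix.mul_diagonal, Matrix.conjTranspose_apply, V, Matrix.of_apply]
  refine Finset.sum_congr rfl fun α _ => ?_
  simp only [Matrix.diagonal_apply, mul_ite, ite_mul, zero_mul, mul_zero,
    Finset.sum_ite_eq, Finset.sum_ite_eq', Finset.mem_univ, if_true, RCLike.star_def]
  ring


end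


open Classical in
/-- Chen's delocalization bound: for a Hermitian matrix `H` on `ℓ²(Λ)` with orthonormal
eigenbasis `{ψ_α}` (eigenvalues `μ_α`), `P_{x,ℓ}` the multiplication by `1[dist(y,x) ≥ ℓ]`,
and `A_{ε,ℓ} = {α : Σ_x |ψ_α(x)| ‖P_{x,ℓ} ψ_α‖ < ε}`, one has, for every `t` and `ζ > 0`,
`(1/|A|) Σ_x ‖P_{x,ℓ} e^{-itH} δ_x‖² ≤ (1 + 1/ζ) ε + (1+ζ) |A ∖ A_{ε,ℓ}| / |A|`. -/
theorem chen_delocalization_bound {Λ : Type*} [Fintype Λ] [DecidableEq Λ] [Nonempty Λ]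
    (dist : Λ → Λ → ℝ) (H : Matrix Λ Λ ℂ) (hHerm : H.IsHermitian)
    (ψ : Λ → Λ → ℂ) (μ : Λ → ℝ)
    (horth : ∀ α β, (∑ x, starRingEnd ℂ (ψ α x) * ψ β x) = if α = β then 1 else 0)
    (heig : ∀ α, H.mulVec (ψ α) = (μ α : ℂ) • ψ α)
    (ℓ ε ζ : ℝ) (hε : 0 < ε) (hζ : 0 < ζ) (t : ℝ) :
    (1 / (Fintype.card Λ : ℝ)) * ∑ x,
        (∑ y, if ℓ ≤ dist y x then
          ‖(NormedSpace.exp ((-Complex.I * (t : ℂ)) • H)).mulVec (Pi.single x 1) y‖ ^ 2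
        else 0)
      ≤ (1 + 1 / ζ) * ε + (1 + ζ) *
        (((Fintype.card Λ : ℝ) -
          ((Finset.univ.filter (fun α : Λ =>
            (∑ x, ‖ψ α x‖ *
              Real.sqrt (∑ y, if ℓ ≤ dist y x then ‖ψ α y‖ ^ 2 else 0)) < ε)).card : ℝ))
          / (Fintype.card Λ : ℝ)) := by
  obtain ⟨hcomplete, hnormal, hexp⟩ := chen_matrix_facts H ψ μ horth heig t
  set n : ℝ := (Fintype.card Λ : ℝ) with hn
  have hnpos : (0:ℝ) < n := by
    rw [hn]; exact_mod_cast Fintype.card_pos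
  set G : Finset Λ := Finset.univ.filter (fun α : Λ =>
      (∑ x, ‖ψ α x‖ * Real.sqrt (∑ y, if ℓ ≤ dist y x then ‖ψ α y‖ ^ 2 else 0)) < ε) with hG
  set c : Λ → Λ → ℂ := fun x α => Complex.exp (-Complex.I * t * μ α) * starRingEnd ℂ (ψ α x)
    with hc
  have hcnorm : ∀ x α, ‖c x α‖ = ‖ψ α x‖ := by
    intro x α
    rw [hc]
    simp only [norm_mul, Complex.norm_exp, Complex.norm_conj]
    have hre : (-Complex.I * t * μ α).re = 0 := by simp
    rw [hre, Real.exp_zero, one_mul]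
  set Nu : Λ → ℝ := fun x =>
    Real.sqrt (∑ y, if ℓ ≤ dist y x then ‖∑ α ∈ G, c x α * ψ α y‖^2 else 0) with hNu
  set Nv : Λ → ℝ := fun x =>
    Real.sqrt (∑ y, if ℓ ≤ dist y x then ‖∑ α ∈ Finset.univ \ G, c x α * ψ α y‖^2 else 0) with hNv
  have key : ∀ x, (∑ y, if ℓ ≤ dist y x then
      ‖(NormedSpace.exp ((-Complex.I * (t : ℂ)) • H)).mulVec (Pi.single x 1) y‖ ^ 2 else 0)
      ≤ (1 + 1/ζ) * Nu x^2 + (1 + ζ) * Nv x^2 := by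
    intro x
    have hsplit : ∀ y, (NormedSpace.exp ((-Complex.I * (t : ℂ)) • H)).mulVec (Pi.single x 1) y
        = (∑ α ∈ G, c x α * ψ α y) + (∑ α ∈ Finset.univ \ G, c x α * ψ α y) := by
      intro y
      rw [hexp x y, add_comm, Finset.sum_sdiff (Finset.subset_univ G)]
    have hnn : (0:ℝ) ≤ ∑ y, if ℓ ≤ dist y x then
        ‖(NormedSpace.exp ((-Complex.I * (t : ℂ)) • H)).mulVec (Pi.single x 1) y‖ ^ 2 else 0 :=
      Finset.sum_nonneg fun y _ => by positivity
    have h1 : Real.sqrt (∑ y, if ℓ ≤ dist y x then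
        ‖(NormedSpace.exp ((-Complex.I * (t : ℂ)) • H)).mulVec (Pi.single x 1) y‖ ^ 2 else 0)
        ≤ Nu x + Nv x := by
      calc Real.sqrt (∑ y, if ℓ ≤ dist y x then
            ‖(NormedSpace.exp ((-Complex.I * (t : ℂ)) • H)).mulVec (Pi.single x 1) y‖ ^ 2 else 0)
          = Real.sqrt (∑ y, if ℓ ≤ dist y x then
            ‖(∑ α ∈ G, c x α * ψ α y) + (∑ α ∈ Finset.univ \ G, c x α * ψ α y)‖ ^ 2 else 0) := by
            congr 1
            exact Finset.sum_congr rfl fun y _ => by rw [hsplit y]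
        _ ≤ Nu x + Nv x := chen_N_add (fun y => ℓ ≤ dist y x) _ _
    have h2 := pow_le_pow_left₀ (Real.sqrt_nonneg _) h1 2
    rw [Real.sq_sqrt hnn] at h2
    exact h2.trans (chen_aux_sq hζ)
  have hNu_le : ∀ x, Nu x ≤ ∑ α ∈ G, ‖ψ α x‖ *
      Real.sqrt (∑ y, if ℓ ≤ dist y x then ‖ψ α y‖^2 else 0) := by
    intro x
    calc Nu x ≤ ∑ α ∈ G, Real.sqrt (∑ y, if ℓ ≤ dist y x then ‖c x α * ψ α y‖^2 else 0) :=
        chen_N_sum (fun y => ℓ ≤ dist y x) G (fun α y => c x α * ψ α y)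
      _ = _ := Finset.sum_congr rfl fun α _ => by
          rw [chen_N_smul (fun y => ℓ ≤ dist y x), hcnorm]
  have sq_bound : ∀ (S : Finset Λ) (x : Λ), (Real.sqrt (∑ y, if ℓ ≤ dist y x then
      ‖∑ α ∈ S, c x α * ψ α y‖^2 else 0))^2 ≤ ∑ α ∈ S, ‖ψ α x‖^2 := by
    intro S x
    rw [Real.sq_sqrt (Finset.sum_nonneg fun y _ => by positivity)]
    calc (∑ y, if ℓ ≤ dist y x then ‖∑ α ∈ S, c x α * ψ α y‖^2 else 0)
        ≤ ∑ y, ‖∑ α ∈ S, c x α * ψ α y‖^2 := by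
          refine Finset.sum_le_sum fun y _ => ?_
          split
          · exact le_refl _
          · positivity
      _ = ∑ α ∈ S, ‖c x α‖^2 := chen_parseval ψ horth S (c x)
      _ = ∑ α ∈ S, ‖ψ α x‖^2 := Finset.sum_congr rfl fun α _ => by rw [hcnorm]
  have hNu_sq : ∀ x, Nu x^2 ≤ ∑ α ∈ G, ‖ψ α x‖^2 := fun x => sq_bound G x
  have hNv_sq : ∀ x, Nv x^2 ≤ ∑ α ∈ Finset.univ \ G, ‖ψ α x‖^2 := fun x =>
    sq_bound (Finset.univ \ G) x
  have hNu2_le_Nu : ∀ x, Nu x^2 ≤ Nu x := by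
    intro x
    have h1 : Nu x^2 ≤ 1 := by
      refine (hNu_sq x).trans ?_
      rw [← hcomplete x]
      exact Finset.sum_le_sum_of_subset_of_nonneg (Finset.subset_univ G)
        (fun α _ _ => by positivity)
    nlinarith [Real.sqrt_nonneg (∑ y, if ℓ ≤ dist y x then ‖∑ α ∈ G, c x α * ψ α y‖^2 else 0)]
  have hSu : ∑ x, Nu x^2 ≤ ε * n := by
    calc ∑ x, Nu x^2 ≤ ∑ x, Nu x := Finset.sum_le_sum fun x _ => hNu2_le_Nu x
      _ ≤ ∑ x, ∑ α ∈ G, ‖ψ α x‖ *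
          Real.sqrt (∑ y, if ℓ ≤ dist y x then ‖ψ α y‖^2 else 0) :=
          Finset.sum_le_sum fun x _ => hNu_le x
      _ = ∑ α ∈ G, ∑ x, ‖ψ α x‖ *
          Real.sqrt (∑ y, if ℓ ≤ dist y x then ‖ψ α y‖^2 else 0) := Finset.sum_comm
      _ ≤ ∑ α ∈ G, ε := Finset.sum_le_sum fun α hα => by
          rw [hG] at hα
          exact le_of_lt (Finset.mem_filter.mp hα).2
      _ = ε * G.card := by rw [Finset.sum_const, nsmul_eq_mul, mul_comm]
      _ ≤ ε * n := by
          refine mul_le_mul_of_nonneg_left ?_ hε.le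
          rw [hn]
          exact_mod_cast Finset.card_le_card (Finset.subset_univ G)
  have hSv : ∑ x, Nv x^2 ≤ n - G.card := by
    calc ∑ x, Nv x^2 ≤ ∑ x, ∑ α ∈ Finset.univ \ G, ‖ψ α x‖^2 :=
        Finset.sum_le_sum fun x _ => hNv_sq x
      _ = ∑ α ∈ Finset.univ \ G, ∑ x, ‖ψ α x‖^2 := Finset.sum_comm
      _ = ∑ α ∈ Finset.univ \ G, (1:ℝ) := Finset.sum_congr rfl fun α _ => hnormal α
      _ = ((Finset.univ \ G).card : ℝ) := by rw [Finset.sum_const, nsmul_eq_mul, mul_one]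
      _ = n - G.card := by
          rw [Finset.card_sdiff_of_subset (Finset.subset_univ G), hn, Finset.card_univ]
          have := Finset.card_le_card (Finset.subset_univ G)
          rw [Finset.card_univ] at this
          push_cast [Nat.cast_sub this]
          ring
  have total : (∑ x, ∑ y, if ℓ ≤ dist y x then
      ‖(NormedSpace.exp ((-Complex.I * (t : ℂ)) • H)).mulVec (Pi.single x 1) y‖ ^ 2 else 0)
      ≤ (1 + 1/ζ) * (ε * n) + (1 + ζ) * (n - G.card) := by
    calc (∑ x, ∑ y, if ℓ ≤ dist y x then
        ‖(NormedSpace.exp ((-Complex.I * (t : ℂ)) • H)).mulVec (Pi.single x 1) y‖ ^ 2 else 0)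
        ≤ ∑ x, ((1 + 1/ζ) * Nu x^2 + (1 + ζ) * Nv x^2) := Finset.sum_le_sum fun x _ => key x
      _ = (1 + 1/ζ) * (∑ x, Nu x^2) + (1 + ζ) * (∑ x, Nv x^2) := by
          rw [Finset.sum_add_distrib, Finset.mul_sum, Finset.mul_sum]
      _ ≤ (1 + 1/ζ) * (ε * n) + (1 + ζ) * (n - G.card) := by
          have c1 : (0:ℝ) ≤ 1 + 1/ζ := by positivity
          have c2 : (0:ℝ) ≤ 1 + ζ := by positivity
          exact add_le_add (mul_le_mul_of_nonneg_left hSu c1)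
            (mul_le_mul_of_nonneg_left hSv c2)
  rw [one_div, inv_mul_le_iff₀ hnpos]
  calc (∑ x, ∑ y, if ℓ ≤ dist y x then
      ‖(NormedSpace.exp ((-Complex.I * (t : ℂ)) • H)).mulVec (Pi.single x 1) y‖ ^ 2 else 0)
      ≤ (1 + 1/ζ) * (ε * n) + (1 + ζ) * (n - G.card) := total
    _ = n * ((1 + 1 / ζ) * ε + (1 + ζ) * ((n - G.card) / n)) := by
        field_simp
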